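/- The map Ψ sending an n-core λ with level-number vector (0, b_1, …, b_{n−1}) to the alcove with Shi coordinates k_{ij} = ⌊(p_{j+1} − p_i)/n⌋, where p_1 < ⋯ < p_n is the increasing rearrangement of {b_{i−1}n + i − 1 : 1 ≤ i ≤ n}, is a bijection from n-cores to dominant alcoves. -/

import Mathlib

open Finset

namespace Shi

/-- Number of boxes in column `j` (0-indexed) of the partition `lam` with `ℓ` positive parts:
the conjugate partition. -/
def conjP (lam : ℕ → ℕ) (ℓ j : ℕ) : ℕ := ((Finset.range ℓ).filter (fun i => j < lam i)).card

/-- Hook length of the (0-indexed) box `(i, j)` of the partition `lam` having `ℓ` positive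
parts. -/
def hookP (lam : ℕ → ℕ) (ℓ i j : ℕ) : ℤ :=
  (lam i : ℤ) - j + conjP lam ℓ j - i - 1

/-- `lam : ℕ → ℕ` (0-indexed, weakly decreasing, exactly `ℓ` positive parts) is an `n`-core:
no hook length is divisible by `n`. -/
def IsCore (n : ℕ) (lam : ℕ → ℕ) (ℓ : ℕ) : Prop :=
  Antitone lam ∧ (∀ i, 0 < lam i ↔ i < ℓ) ∧
    ∀ i j, i < ℓ → j < lam i → ¬ ((n : ℤ) ∣ hookP lam ℓ i j)

/-- The `k`-th β-number (first column hook length) of `lam`, 0-indexed. -/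
def betaP (lam : ℕ → ℕ) (ℓ k : ℕ) : ℤ := (lam k : ℤ) + ℓ - k - 1

/-- `x` is a bead of the original abacus of `lam`: a negative integer or a β-number. -/
def IsBead (lam : ℕ → ℕ) (ℓ : ℕ) (x : ℤ) : Prop := x < 0 ∨ ∃ k < ℓ, betaP lam ℓ k = x

/-- Level numbers of the original abacus of the `n`-core `lam`: `bvec n lam ℓ i` is the
number of β-numbers congruent to `i` mod `n`, i.e. the level of the first gap on runner
`i`. -/
def bvec (n : ℕ) (lam : ℕ → ℕ) (ℓ i : ℕ) : ℕ :=
  ((Finset.range ℓ).filter (fun k => betaP lam ℓ k % (n : ℤ) = (i : ℤ))).card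

/-- The increasing rearrangement `p_1 < ⋯ < p_n` (here 0-indexed) of the numbers
`b_{i-1}·n + i - 1`. -/
def psort (n : ℕ) (lam : ℕ → ℕ) (ℓ : ℕ) : List ℕ :=
  ((Finset.range n).image (fun i => bvec n lam ℓ i * n + i)).sort (· ≤ ·)

/-- Shi coordinates of the alcove `Ψ(lam)`: `k_{ij} = ⌊(p_{j+1} - p_i)/n⌋`, 0-indexed. -/
def kOf (n : ℕ) (lam : ℕ → ℕ) (ℓ : ℕ) (i j : ℕ) : ℤ :=
  (((psort n lam ℓ).getD (j + 1) 0 : ℤ) - ((psort n lam ℓ).getD i 0 : ℤ)) / (n : ℤ)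

/-- Shi's condition for a family of integers to be the coordinates of an alcove. -/
def IsAlcoveCoords (n : ℕ) (k : ℕ → ℕ → ℤ) : Prop :=
  ∀ i t j, i ≤ t → t < j → j + 2 ≤ n →
    k i t + k (t + 1) j ≤ k i j ∧ k i j ≤ k i t + k (t + 1) j + 1

/-- Coordinates of a dominant alcove. -/
def DomAlcoveCoords (n : ℕ) (k : ℕ → ℕ → ℤ) : Prop :=
  (∀ i j, i ≤ j → j + 2 ≤ n → 0 ≤ k i j) ∧ IsAlcoveCoords n k

/-- `k` is the family of Shi coordinates of the `m`-minimal alcove of the dominant `m`-Shi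
region with Shi tableau `e`: it is a dominant alcove of the region, coordinatewise minimal
among alcoves of the region. -/
def MinAlcRel (n m : ℕ) (e k : ℕ → ℕ → ℤ) : Prop :=
  DomAlcoveCoords n k ∧ (∀ i j, i ≤ j → j + 2 ≤ n → min (k i j) (m : ℤ) = e i j) ∧
  ∀ k', DomAlcoveCoords n k' →
    (∀ i j, i ≤ j → j + 2 ≤ n → min (k' i j) (m : ℤ) = e i j) →
    ∀ i j, i ≤ j → j + 2 ≤ n → k i j ≤ k' i j


private lemma ediv_bounds (a b m : ℤ) (hm : 0 < m) :
    a / m + b / m ≤ (a + b) / m ∧ (a + b) / m ≤ a / m + b / m + 1 := by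
  have ha := Int.emod_add_mul_ediv a m
  have hb := Int.emod_add_mul_ediv b m
  have ha0 := Int.emod_nonneg a (ne_of_gt hm)
  have ha1 := Int.emod_lt_of_pos a hm
  have hb0 := Int.emod_nonneg b (ne_of_gt hm)
  have hb1 := Int.emod_lt_of_pos b hm
  have h1 : (a + b) = (a % m + b % m) + m * (a / m + b / m) := by ring_nf; omega
  have h2 : (a + b) / m = (a % m + b % m) / m + (a / m + b / m) := by
    rw [h1, Int.add_mul_ediv_left _ _ (ne_of_gt hm)]
  have h3 : 0 ≤ (a % m + b % m) / m := Int.ediv_nonneg (by omega) hm.le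
  have h4 : (a % m + b % m) / m < 2 := by
    rw [Int.ediv_lt_iff_lt_mul hm]; omega
  omega

/-- `(m*q + r)/m = q` when `0 ≤ r < m`. -/
private lemma ediv_shift (m q r : ℤ) (hm : 0 < m) (h0 : 0 ≤ r) (h1 : r < m) :
    (m * q + r) / m = q := by
  rw [add_comm, Int.add_mul_ediv_left _ _ (ne_of_gt hm)]
  rw [Int.ediv_eq_zero_of_lt h0 h1]; ring

private lemma lower_eq_range (S : Finset ℕ) (h : ∀ x ∈ S, ∀ y, y ≤ x → y ∈ S) :
    S = Finset.range S.card := by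
  ext x
  simp only [Finset.mem_range]
  constructor
  · intro hx
    have hsub : Finset.range (x + 1) ⊆ S := by
      intro y hy
      exact h x hx y (by simp [Nat.lt_succ_iff] at hy; omega)
    have := Finset.card_le_card hsub
    simpa using this
  · intro hx
    by_contra hxS
    have hsub : S ⊆ Finset.range x := by
      intro z hz
      simp only [Finset.mem_range]
      by_contra hzx
      exact hxS (h z hz x (by omega))
    have := Finset.card_le_card hsub
    simp only [Finset.card_range] at this
    omega

private lemma lower_of_pred (S : Finset ℕ) (h : ∀ x, x + 1 ∈ S → x ∈ S) :
    ∀ x ∈ S, ∀ y, y ≤ x → y ∈ S := by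
  have key : ∀ d y, y + d ∈ S → y ∈ S := by
    intro d
    induction d with
    | zero => simpa using fun y h => h
    | succ d ih =>
      intro y hy
      exact ih y (h (y + d) (by rw [Nat.add_succ] at hy; exact hy))
  intro x hx y hy
  obtain ⟨d, rfl⟩ := Nat.exists_eq_add_of_le hy
  exact key d y hx

/-- getD of a ≤-sorted list is monotone on valid indices. -/
private lemma sorted_getD_mono {L : List ℕ} (hL : L.Pairwise (· ≤ ·)) {i j : ℕ}
    (hij : i ≤ j) (hj : j < L.length) : L.getD i 0 ≤ L.getD j 0 := by
  rcases eq_or_lt_of_le hij with rfl | hlt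
  · exact le_refl _
  · rw [List.getD_eq_getElem _ _ (lt_of_le_of_lt hij hj), List.getD_eq_getElem _ _ hj]
    exact List.pairwise_iff_getElem.mp hL i j _ hj hlt

private lemma sorted_getD_strictMono {L : List ℕ} (hL : L.Pairwise (· < ·)) {i j : ℕ}
    (hij : i < j) (hj : j < L.length) : L.getD i 0 < L.getD j 0 := by
  rw [List.getD_eq_getElem _ _ (lt_trans hij hj), List.getD_eq_getElem _ _ hj]
  exact List.pairwise_iff_getElem.mp hL i j _ hj hij

/-- A strictly monotone enumeration of a finset is its sort. -/
private lemma sort_eq_map {n : ℕ} {p : ℕ → ℕ}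
    (hp : ∀ i j, i < j → j < n → p i < p j) :
    ((Finset.range n).image p).sort (· ≤ ·) = (List.range n).map p := by
  have hlen : ((List.range n).map p).length = n := by simp
  have hget : ∀ i (h : i < n), ((List.range n).map p)[i]'(by simp [hlen, h]) = p i := by
    intro i h
    simp
  have hsortedlt : ((List.range n).map p).Pairwise (· < ·) := by
    rw [List.pairwise_iff_getElem]
    intro i j hi hj hij
    rw [hlen] at hi hj
    rw [hget i (lt_trans hij hj), hget j hj]
    exact hp i j hij hj
  have hnodup : ((List.range n).map p).Nodup := hsortedlt.nodup
  have hsorted : ((List.range n).map p).Pairwise (· ≤ ·) := hsortedlt.imp le_of_lt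
  refine List.Perm.eq_of_pairwise' (Finset.pairwise_sort _ _) hsorted ?_
  refine List.perm_of_nodup_nodup_toFinset_eq (Finset.sort_nodup _ _) hnodup ?_
  rw [Finset.sort_toFinset]
  ext x
  simp


/-! ### Definitions under test (copies from the problem file) -/

private lemma beta_gap {lam : ℕ → ℕ} {ℓ : ℕ} (hA : Antitone lam) {k k' : ℕ}
    (hkk : k ≤ k') (hk' : k' < ℓ) :
    betaP lam ℓ k' + ((k' : ℤ) - k) ≤ betaP lam ℓ k := by
  have h2 : lam k' ≤ lam k := hA hkk
  unfold betaP
  omega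

private lemma betaP_pos {n : ℕ} {lam : ℕ → ℕ} {ℓ : ℕ} (h : IsCore n lam ℓ) {k : ℕ}
    (hk : k < ℓ) : 1 ≤ betaP lam ℓ k := by
  have h1 : 0 < lam k := (h.2.1 k).mpr hk
  unfold betaP
  omega

private lemma flush {n : ℕ} {lam : ℕ → ℕ} {ℓ : ℕ} (h : IsCore n lam ℓ) (hn : 0 < n)
    {i : ℕ} (hi : i < ℓ) (hbn : (n : ℤ) ≤ betaP lam ℓ i) :
    ∃ i' < ℓ, betaP lam ℓ i' = betaP lam ℓ i - n := by
  by_contra hno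
  push_neg at hno
  set g : ℤ := betaP lam ℓ i - n with hg
  have hg0 : 0 ≤ g := by omega
  have hgi : g < betaP lam ℓ i := by
    have : (0:ℤ) < n := by exact_mod_cast hn
    omega
  classical
  set S := (Finset.range ℓ).filter (fun k => g < betaP lam ℓ k) with hS
  set c := S.card with hc
  have hSlow : ∀ x ∈ S, ∀ y, y ≤ x → y ∈ S := by
    intro x hx y hy
    simp only [hS, Finset.mem_filter, Finset.mem_range] at hx ⊢
    have hxl := hx.1
    have := beta_gap h.1 hy hxl
    constructor
    · omega
    · omega
  have hSrange : S = Finset.range c := lower_eq_range S hSlow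
  have hcdef : (Finset.range ℓ).filter (fun k => g < betaP lam ℓ k) = S := hS.symm
  have hmem : ∀ k, k < ℓ → (g < betaP lam ℓ k ↔ k < c) := by
    intro k hk
    constructor
    · intro hgk
      have hmem2 : k ∈ S := by simp [hS, hk, hgk]
      rw [hSrange] at hmem2
      simpa using hmem2
    · intro hkc
      have hmem2 : k ∈ S := by rw [hSrange]; simpa using hkc
      simp only [hS, Finset.mem_filter] at hmem2
      exact hmem2.2
  have hcl : c ≤ ℓ := by
    rw [hc, hS]
    exact le_trans (Finset.card_filter_le _ _) (by simp)
  have hic : i < c := (hmem i hi).mp hgi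
  have hbinj : ∀ k k', k < ℓ → k' < ℓ → betaP lam ℓ k = betaP lam ℓ k' → k = k' := by
    intro k k' hk hk' he
    by_contra hne
    rcases Nat.lt_or_ge k k' with hlt | hge
    · have := beta_gap h.1 (le_of_lt hlt) hk'; omega
    · have hlt : k' < k := by omega
      have := beta_gap h.1 (le_of_lt hlt) hk; omega
  have hbpos : ∀ k, k < ℓ → 1 ≤ betaP lam ℓ k := fun k hk => betaP_pos h hk
  -- ℓ ≤ g + c
  have hlc : (ℓ : ℤ) ≤ g + c := by
    have hTcard : ((Finset.range ℓ).filter (fun k => ¬ g < betaP lam ℓ k)).card = ℓ - c := by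
      have h2 := Finset.card_filter_add_card_filter_not
        (s := Finset.range ℓ) (p := fun k => g < betaP lam ℓ k)
      simp only [Finset.card_range] at h2
      rw [hcdef] at h2
      omega
    have hle : ((Finset.range ℓ).filter (fun k => ¬ g < betaP lam ℓ k)).card ≤ g.toNat := by
      have hh : ((Finset.range ℓ).filter (fun k => ¬ g < betaP lam ℓ k)).card ≤ (Finset.range g.toNat).card := by
        apply Finset.card_le_card_of_injOn (fun k => (betaP lam ℓ k).toNat)
        · intro a ha
          simp only [Finset.mem_coe, Finset.mem_filter, Finset.mem_range] at ha
          try dsimp only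
          have h1 := hbpos a ha.1
          have h2 : betaP lam ℓ a ≠ g := hno a ha.1
          have h3 : ¬ g < betaP lam ℓ a := ha.2
          simp only [Finset.mem_coe, Finset.mem_range]
          omega
        · intro a ha b hb he
          try dsimp only at he
          simp only [Finset.coe_filter, Set.mem_setOf_eq, Finset.mem_range] at ha hb
          have h1 := hbpos a ha.1
          have h2 := hbpos b hb.1
          exact hbinj a b ha.1 hb.1 (by omega)
      simpa using hh
    omega
  -- g + c ≤ betaP lam ℓ i + i
  have hkey : g + c ≤ betaP lam ℓ i + i := by
    have hle : (Finset.Ioo i c).card ≤ (Finset.Ioo g.toNat (betaP lam ℓ i).toNat).card := by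
      apply Finset.card_le_card_of_injOn (fun k => (betaP lam ℓ k).toNat)
      · intro a ha
        simp only [Finset.mem_coe, Finset.mem_Ioo] at ha ⊢
        try dsimp only
        have hal : a < ℓ := lt_of_lt_of_le ha.2 hcl
        have h1 := (hmem a hal).mpr ha.2
        have h2 := beta_gap h.1 (le_of_lt ha.1) hal
        omega
      · intro a ha b hb he
        try dsimp only at he
        simp only [Finset.coe_Ioo, Set.mem_Ioo] at ha hb
        have hal : a < ℓ := lt_of_lt_of_le ha.2 hcl
        have hbl : b < ℓ := lt_of_lt_of_le hb.2 hcl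
        have h1 := hbpos a hal
        have h2 := hbpos b hbl
        exact hbinj a b hal hbl (by omega)
    simp only [Nat.card_Ioo] at hle
    omega
  set j : ℕ := (g + c - ℓ).toNat with hj
  have hjz : (j : ℤ) = g + c - ℓ := by omega
  have hblam : ∀ k, (lam k : ℤ) = betaP lam ℓ k - ℓ + k + 1 := by
    intro k
    unfold betaP
    push_cast
    ring
  have hjlam : j < lam i := by
    have hx : (j : ℤ) < lam i := by rw [hjz, hblam i]; omega
    exact_mod_cast hx
  have hconj : conjP lam ℓ j = c := by
    rw [conjP]
    have hfe : (Finset.range ℓ).filter (fun kk => j < lam kk) = S := by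
      rw [hS]
      apply Finset.filter_congr
      intro kk hkk
      simp only [Finset.mem_range] at hkk
      have hlamk := hblam kk
      constructor
      · intro hjk
        -- j < lam kk → g < betaP lam ℓ kk
        by_contra hng
        simp only [not_lt] at hng
        have hkc : ¬ kk < c := fun hc2 => absurd ((hmem kk hkk).mpr hc2) (not_lt.mpr hng)
        have hckk : c ≤ kk := by omega
        have hclt : c < ℓ := lt_of_le_of_lt hckk hkk
        have hgap := beta_gap h.1 hckk hkk
        have hbc : betaP lam ℓ c ≤ g := by
          by_contra hbc
          exact absurd ((hmem c hclt).mp (by omega)) (lt_irrefl c)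
        have hbcne : betaP lam ℓ c ≠ g := hno c hclt
        have hjlt : (j : ℤ) < lam kk := by exact_mod_cast hjk
        omega
      · intro hgkk
        -- g < betaP kk → j < lam kk
        have hkc : kk < c := (hmem kk hkk).mp hgkk
        have hc1l : c - 1 < ℓ := by omega
        have hgap := beta_gap h.1 (Nat.le_sub_one_of_lt hkc) hc1l
        have hbc1 : g < betaP lam ℓ (c-1) := (hmem (c-1) hc1l).mpr (by omega)
        have hx : (j:ℤ) < lam kk := by
          rw [hjz, hlamk]
          have : ((c:ℤ) - 1) - kk ≤ (((c-1):ℕ):ℤ) - kk := by omega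
          omega
        exact_mod_cast hx
    rw [hfe]
  have hhook : hookP lam ℓ i j = (n : ℤ) := by
    rw [hookP, hconj, hblam i]
    omega
  exact h.2.2 i j hi hjlam (by rw [hhook])

private lemma bvec_zero {n : ℕ} {lam : ℕ → ℕ} {ℓ : ℕ} (h : IsCore n lam ℓ) (hn : 2 ≤ n) :
    bvec n lam ℓ 0 = 0 := by
  have main : ∀ v : ℕ, ∀ k, k < ℓ → betaP lam ℓ k ≤ v → ¬ betaP lam ℓ k % (n:ℤ) = 0 := by
    intro v
    induction v using Nat.strong_induction_on with
    | _ v ih =>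
      intro k hk hle hmod
      have h1 : 1 ≤ betaP lam ℓ k := betaP_pos h hk
      have hdvd : (n:ℤ) ∣ betaP lam ℓ k := Int.dvd_of_emod_eq_zero hmod
      have hn' : (n : ℤ) ≤ betaP lam ℓ k := Int.le_of_dvd (by omega) hdvd
      obtain ⟨k', hk', hbk'⟩ := flush h (by omega) hk hn'
      have hvn : n ≤ v := by omega
      apply ih (v - n) (by omega) k' hk' (by omega)
      rw [hbk']
      obtain ⟨t, ht⟩ := hdvd
      have : betaP lam ℓ k - n = n * (t - 1) := by rw [ht]; ring
      rw [this, Int.mul_emod_right]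
  rw [bvec, Finset.card_eq_zero, Finset.filter_eq_empty_iff]
  intro k hk
  simp only [Finset.mem_range] at hk
  have := main (betaP lam ℓ k).toNat k hk (by have := betaP_pos h hk; omega)
  simpa using this


private lemma beta_inj {n : ℕ} {lam : ℕ → ℕ} {ℓ : ℕ} (h : IsCore n lam ℓ)
    {k k' : ℕ} (hk : k < ℓ) (hk' : k' < ℓ) (he : betaP lam ℓ k = betaP lam ℓ k') : k = k' := by
  by_contra hne
  rcases Nat.lt_or_ge k k' with hlt | hge
  · have := beta_gap h.1 (le_of_lt hlt) hk'; omega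
  · have hlt : k' < k := by omega
    have := beta_gap h.1 (le_of_lt hlt) hk; omega

private lemma mem_beta_iff {n : ℕ} {lam : ℕ → ℕ} {ℓ : ℕ} (h : IsCore n lam ℓ) (hn : 2 ≤ n)
    (x : ℤ) :
    (∃ k, k < ℓ ∧ betaP lam ℓ k = x) ↔
      (∃ r, r < n ∧ ∃ q, q < bvec n lam ℓ r ∧ x = q * n + r) := by
  classical
  have hnz : (0:ℤ) < n := by exact_mod_cast (by omega : 0 < n)
  -- the level sets
  have hV : ∀ r, r < n →
      ((Finset.range ℓ).filter (fun k => betaP lam ℓ k % (n:ℤ) = (r:ℤ))).image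
        (fun k => ((betaP lam ℓ k) / n).toNat) = Finset.range (bvec n lam ℓ r) := by
    intro r hr
    set Vr := ((Finset.range ℓ).filter (fun k => betaP lam ℓ k % (n:ℤ) = (r:ℤ))).image
        (fun k => ((betaP lam ℓ k) / n).toNat) with hVr
    have hcard : Vr.card = bvec n lam ℓ r := by
      rw [hVr, bvec]
      apply Finset.card_image_of_injOn
      intro a ha b hb he
      simp only [Finset.coe_filter, Set.mem_setOf_eq, Finset.mem_range] at ha hb
      try dsimp only at he
      have h1 := betaP_pos h ha.1
      have h2 := betaP_pos h hb.1
      have hd1 : 0 ≤ betaP lam ℓ a / n := Int.ediv_nonneg (by omega) hnz.le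
      have hd2 : 0 ≤ betaP lam ℓ b / n := Int.ediv_nonneg (by omega) hnz.le
      have he1 := Int.emod_add_mul_ediv (betaP lam ℓ a) n
      have he2 := Int.emod_add_mul_ediv (betaP lam ℓ b) n
      have hde : betaP lam ℓ a / n = betaP lam ℓ b / n := by omega
      have hde2 : (n:ℤ) * (betaP lam ℓ a / n) = n * (betaP lam ℓ b / n) := by rw [hde]
      exact beta_inj h ha.1 hb.1 (by omega)
    have hpred : ∀ q, q + 1 ∈ Vr → q ∈ Vr := by
      intro q hq
      rw [hVr] at hq ⊢
      simp only [Finset.mem_image, Finset.mem_filter, Finset.mem_range] at hq ⊢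
      obtain ⟨k, ⟨hkl, hkr⟩, hkq⟩ := hq
      have h1 := betaP_pos h hkl
      have hd1 : 0 ≤ betaP lam ℓ k / n := Int.ediv_nonneg (by omega) hnz.le
      have he1 := Int.emod_add_mul_ediv (betaP lam ℓ k) n
      have hq' : betaP lam ℓ k / n = ((q:ℤ) + 1) := by omega
      have hmul : (n:ℤ) * (betaP lam ℓ k / n) = n*q + n := by rw [hq']; ring
      have hnn : (0:ℤ) ≤ (n:ℤ) * q := by positivity
      have hbk : betaP lam ℓ k = n*q + n + r := by omega
      have hge : (n:ℤ) ≤ betaP lam ℓ k := by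
        have : (0:ℤ) ≤ r := by positivity
        omega
      obtain ⟨k', hk'l, hbk'⟩ := flush h (by omega) hkl hge
      have hbk2 : betaP lam ℓ k' = (n:ℤ) * q + r := by rw [hbk']; omega
      refine ⟨k', ⟨hk'l, ?_⟩, ?_⟩
      · rw [hbk2, add_comm ((n:ℤ) * q) (r:ℤ), Int.add_mul_emod_self_left,
          Int.emod_eq_of_lt (by positivity) (by exact_mod_cast hr)]
      · rw [hbk2, ediv_shift n q r hnz (by positivity) (by exact_mod_cast hr)]
        omega
    have hlow := lower_of_pred Vr hpred
    rw [← hcard]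
    exact lower_eq_range Vr hlow
  constructor
  · rintro ⟨k, hkl, rfl⟩
    have h1 := betaP_pos h hkl
    have hm0 : 0 ≤ betaP lam ℓ k % n := Int.emod_nonneg _ (by omega)
    have hm1 : betaP lam ℓ k % n < n := Int.emod_lt_of_pos _ hnz
    set r := (betaP lam ℓ k % n).toNat with hr
    have hrn : r < n := by omega
    have hrz : (r : ℤ) = betaP lam ℓ k % n := by omega
    refine ⟨r, hrn, ((betaP lam ℓ k) / n).toNat, ?_, ?_⟩
    · have : ((betaP lam ℓ k) / n).toNat ∈ Finset.range (bvec n lam ℓ r) := by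
        rw [← hV r hrn]
        exact Finset.mem_image_of_mem _ (by simp [Finset.mem_filter, hkl, hrz])
      simpa using this
    · have hd1 : 0 ≤ betaP lam ℓ k / n := Int.ediv_nonneg (by omega) hnz.le
      have he1 := Int.emod_add_mul_ediv (betaP lam ℓ k) n
      have hq2 : (((betaP lam ℓ k / n).toNat : ℤ)) = betaP lam ℓ k / n := by omega
      rw [hq2, hrz, mul_comm]
      omega
  · rintro ⟨r, hrn, q, hq, rfl⟩
    have : q ∈ Finset.range (bvec n lam ℓ r) := by simpa using hq
    rw [← hV r hrn] at this
    simp only [Finset.mem_image, Finset.mem_filter, Finset.mem_range] at this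
    obtain ⟨k, ⟨hkl, hkr⟩, hkq⟩ := this
    have h1 := betaP_pos h hkl
    have hd1 : 0 ≤ betaP lam ℓ k / n := Int.ediv_nonneg (by omega) hnz.le
    have he1 := Int.emod_add_mul_ediv (betaP lam ℓ k) n
    refine ⟨k, hkl, ?_⟩
    have hq' : betaP lam ℓ k / n = (q:ℤ) := by omega
    have hmul : (n:ℤ) * (betaP lam ℓ k / n) = n * q := by rw [hq']
    have hcomm : ((q:ℤ)) * n = n * q := mul_comm _ _
    omega

private lemma core_eq_of_bvec {n : ℕ} {lam lam' : ℕ → ℕ} {ℓ ℓ' : ℕ}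
    (h : IsCore n lam ℓ) (h' : IsCore n lam' ℓ') (hn : 2 ≤ n)
    (hb : ∀ r, r < n → bvec n lam ℓ r = bvec n lam' ℓ' r) :
    lam = lam' ∧ ℓ = ℓ' := by
  classical
  have hBmem : ∀ x : ℤ, (∃ k, k < ℓ ∧ betaP lam ℓ k = x) ↔ (∃ k, k < ℓ' ∧ betaP lam' ℓ' k = x) := by
    intro x
    rw [mem_beta_iff h hn, mem_beta_iff h' hn]
    constructor
    · rintro ⟨r, hr, q, hq, rfl⟩
      exact ⟨r, hr, q, by rw [← hb r hr]; exact hq, rfl⟩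
    · rintro ⟨r, hr, q, hq, rfl⟩
      exact ⟨r, hr, q, by rw [hb r hr]; exact hq, rfl⟩
  have hBeq : (Finset.range ℓ).image (betaP lam ℓ) = (Finset.range ℓ').image (betaP lam' ℓ') := by
    ext x
    simp only [Finset.mem_image, Finset.mem_range]
    constructor
    · rintro ⟨k, hk, he⟩
      obtain ⟨k', h1, h2⟩ := (hBmem x).mp ⟨k, hk, he⟩
      exact ⟨k', h1, h2⟩
    · rintro ⟨k, hk, he⟩
      obtain ⟨k', h1, h2⟩ := (hBmem x).mpr ⟨k, hk, he⟩
      exact ⟨k', h1, h2⟩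
  have hcard1 : ((Finset.range ℓ).image (betaP lam ℓ)).card = ℓ := by
    rw [Finset.card_image_of_injOn, Finset.card_range]
    intro a ha b hb he
    simp only [Finset.coe_range, Set.mem_Iio] at ha hb
    exact beta_inj h ha hb he
  have hcard2 : ((Finset.range ℓ').image (betaP lam' ℓ')).card = ℓ' := by
    rw [Finset.card_image_of_injOn, Finset.card_range]
    intro a ha b hb he
    simp only [Finset.coe_range, Set.mem_Iio] at ha hb
    exact beta_inj h' ha hb he
  have hll : ℓ = ℓ' := by rw [← hcard1, ← hcard2, hBeq]
  subst hll
  -- the two beta enumerations are equal as sorted lists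
  have hlists : (List.range ℓ).map (betaP lam ℓ) = (List.range ℓ).map (betaP lam' ℓ) := by
    have hmk : ∀ (g : ℕ → ℤ) i (hi : i < ℓ),
        ((List.range ℓ).map g)[i]'(by simpa using hi) = g i := by
      intro g i hi
      simp
    have hs : ∀ (lam0 : ℕ → ℕ), IsCore n lam0 ℓ →
        ((List.range ℓ).map (betaP lam0 ℓ)).Pairwise (· > ·) := by
      intro lam0 h0
      rw [List.pairwise_iff_getElem]
      intro i j hi hj hij
      simp only [List.length_map, List.length_range] at hi hj
      rw [hmk _ i (lt_trans hij hj), hmk _ j hj]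
      have := beta_gap h0.1 (le_of_lt hij) hj
      simp only [gt_iff_lt]
      omega
    have hnodup : ∀ (lam0 : ℕ → ℕ), IsCore n lam0 ℓ →
        ((List.range ℓ).map (betaP lam0 ℓ)).Nodup := by
      intro lam0 h0
      exact List.Pairwise.imp (fun hlt => ne_of_gt hlt) (hs lam0 h0)
    haveI : IsAntisymm ℤ (· > ·) := ⟨fun a b h1 h2 => absurd h1 (not_lt.mpr (le_of_lt h2))⟩
    refine List.Perm.eq_of_pairwise' (hs lam h) (hs lam' h') ?_
    refine List.perm_of_nodup_nodup_toFinset_eq (hnodup lam h) (hnodup lam' h') ?_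
    have ht : ∀ (g : ℕ → ℤ), ((List.range ℓ).map g).toFinset = (Finset.range ℓ).image g := by
      intro g
      ext x
      simp
    rw [ht, ht, hBeq]
  have hbeta : ∀ k, k < ℓ → betaP lam ℓ k = betaP lam' ℓ k := by
    intro k hk
    have := congrArg (fun l => l.getD k 0) hlists
    simp only [List.getD_eq_getElem?_getD, List.getElem?_map, List.getElem?_range hk] at this
    simpa using this
  have hlam : lam = lam' := by
    funext k
    rcases Nat.lt_or_ge k ℓ with hk | hk
    · have := hbeta k hk
      unfold betaP at this
      omega
    · have h1 : lam k = 0 := by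
        rcases Nat.eq_zero_or_pos (lam k) with h0 | h0
        · exact h0
        · exact absurd ((h.2.1 k).mp h0) (by omega)
      have h2 : lam' k = 0 := by
        rcases Nat.eq_zero_or_pos (lam' k) with h0 | h0
        · exact h0
        · exact absurd ((h'.2.1 k).mp h0) (by omega)
      rw [h1, h2]
  exact ⟨hlam, rfl⟩


private lemma build_core {n : ℕ} (hn : 2 ≤ n) (b : ℕ → ℕ) (hb0 : b 0 = 0) :
    ∃ lam ℓ, IsCore n lam ℓ ∧ (∀ r, r < n → bvec n lam ℓ r = b r) := by
  classical
  set F := (Finset.range n).biUnion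
    (fun r => (Finset.range (b r)).image (fun q => q * n + r)) with hF
  set ℓ := F.card with hℓ
  set a : ℕ → ℕ := fun m => (Finset.sort F (· ≤ ·)).getD m 0 with ha
  set lam : ℕ → ℕ := fun k => if k < ℓ then a (ℓ-1-k) - (ℓ-1-k) else 0 with hlam
  have hmemF : ∀ x : ℕ, x ∈ F ↔ ∃ r, r < n ∧ ∃ q, q < b r ∧ x = q * n + r := by
    intro x
    rw [hF]
    simp only [Finset.mem_biUnion, Finset.mem_range, Finset.mem_image]
    constructor
    · rintro ⟨r, hr, q, hq, rfl⟩
      exact ⟨r, hr, q, hq, rfl⟩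
    · rintro ⟨r, hr, q, hq, rfl⟩
      exact ⟨r, hr, q, hq, rfl⟩
  have hFpos : ∀ x ∈ F, 1 ≤ x := by
    intro x hx
    obtain ⟨r, hr, q, hq, rfl⟩ := (hmemF x).mp hx
    rcases Nat.eq_zero_or_pos r with rfl | hrpos
    · rw [hb0] at hq; omega
    · omega
  have hlen : (Finset.sort F (· ≤ ·)).length = ℓ := by rw [hℓ, Finset.length_sort]
  have ha_mem : ∀ m, m < ℓ → a m ∈ F := by
    intro m hm
    have hm' : m < (Finset.sort F (· ≤ ·)).length := by omega
    show (Finset.sort F (· ≤ ·)).getD m 0 ∈ F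
    rw [List.getD_eq_getElem _ 0 hm']
    exact (Finset.mem_sort (· ≤ ·)).mp (List.getElem_mem hm')
  have ha_surj : ∀ x ∈ F, ∃ m, m < ℓ ∧ a m = x := by
    intro x hx
    have hxa : x ∈ Finset.sort F (· ≤ ·) := (Finset.mem_sort (· ≤ ·)).mpr hx
    obtain ⟨m, hm, he⟩ := List.mem_iff_getElem.mp hxa
    refine ⟨m, by omega, ?_⟩
    show (Finset.sort F (· ≤ ·)).getD m 0 = x
    rw [List.getD_eq_getElem _ 0 hm, he]
  have ha_lt : ∀ m m', m < m' → m' < ℓ → a m < a m' := by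
    intro m m' hmm hm'
    show (Finset.sort F (· ≤ ·)).getD m 0 < (Finset.sort F (· ≤ ·)).getD m' 0
    exact sorted_getD_strictMono (Finset.sortedLT_sort F).pairwise hmm (by omega)
  have ha_gap : ∀ d m, m + d < ℓ → a m + d ≤ a (m + d) := by
    intro d
    induction d with
    | zero => intro m _; simp
    | succ d ih =>
      intro m hm
      have h1 := ih m (by omega)
      have h2 := ha_lt (m + d) (m + d + 1) (by omega) (by omega)
      have h3 : m + (d + 1) = m + d + 1 := by omega
      rw [h3]
      omega
  have ha_ge : ∀ m, m < ℓ → m + 1 ≤ a m := by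
    intro m hm
    have h0 : 1 ≤ a 0 := hFpos _ (ha_mem 0 (by omega))
    have hg := ha_gap m 0 (by omega)
    simp only [Nat.zero_add] at hg
    omega
  have hlamval : ∀ k, k < ℓ → lam k = a (ℓ-1-k) - (ℓ-1-k) := by
    intro k hk
    rw [hlam]
    simp [hk]
  have hlamzero : ∀ k, ¬ k < ℓ → lam k = 0 := by
    intro k hk
    rw [hlam]
    simp [hk]
  have hlampos : ∀ k, k < ℓ → 1 ≤ lam k := by
    intro k hk
    rw [hlamval k hk]
    have := ha_ge (ℓ-1-k) (by omega)
    omega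
  have hanti : Antitone lam := by
    intro k k' hkk
    rcases Nat.lt_or_ge k' ℓ with hk' | hk'
    · rw [hlamval k (by omega), hlamval k' hk']
      have hgap := ha_gap ((ℓ-1-k) - (ℓ-1-k')) (ℓ-1-k') (by omega)
      have heq : (ℓ-1-k') + ((ℓ-1-k) - (ℓ-1-k')) = ℓ-1-k := by omega
      rw [heq] at hgap
      omega
    · rw [hlamzero k' (by omega)]
      omega
  have hposiff : ∀ k, 0 < lam k ↔ k < ℓ := by
    intro k
    constructor
    · intro hpos
      by_contra hk
      rw [hlamzero k hk] at hpos
      omega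
    · intro hk
      have := hlampos k hk
      omega
  have hbeta : ∀ k, k < ℓ → betaP lam ℓ k = (a (ℓ-1-k) : ℤ) := by
    intro k hk
    unfold betaP
    rw [hlamval k hk]
    have := ha_ge (ℓ-1-k) (by omega)
    omega
  -- the hook condition
  have hhook : ∀ i j, i < ℓ → j < lam i → ¬ ((n : ℤ) ∣ hookP lam ℓ i j) := by
    intro i j hi hj hdvd
    set c := conjP lam ℓ j with hc
    have hfe : (Finset.range ℓ).filter (fun k => j < lam k) = Finset.range c := by
      rw [hc, conjP]
      apply lower_eq_range
      intro x hx y hy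
      simp only [Finset.mem_filter, Finset.mem_range] at hx ⊢
      exact ⟨by omega, lt_of_lt_of_le hx.2 (hanti hy)⟩
    have hmem2 : ∀ k, k < ℓ → (j < lam k ↔ k < c) := by
      intro k hk
      constructor
      · intro hjk
        have : k ∈ Finset.range c := by rw [← hfe]; simp [hk, hjk]
        simpa using this
      · intro hkc
        have : k ∈ (Finset.range ℓ).filter (fun k => j < lam k) := by
          rw [hfe]; simpa using hkc
        simp only [Finset.mem_filter] at this
        exact this.2
    have hic : i < c := (hmem2 i hi).mp hj
    have hcl : c ≤ ℓ := by
      rw [hc, conjP]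
      exact le_trans (Finset.card_filter_le _ _) (by simp [hℓ])
    set x := j + ℓ - c with hx
    set m := ℓ - 1 - i with hm
    -- x < a m
    have hc1 : c - 1 < ℓ := by omega
    have hlc1 : j < lam (c-1) := (hmem2 (c-1) hc1).mpr (by omega)
    have hxlt : x < a m := by
      rw [hlamval (c-1) hc1] at hlc1
      have hgap := ha_gap (m - (ℓ - c)) (ℓ - c) (by omega)
      have heq : (ℓ - c) + (m - (ℓ - c)) = m := by omega
      rw [heq] at hgap
      have heq2 : ℓ - 1 - (c-1) = ℓ - c := by omega
      rw [heq2] at hlc1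
      have := ha_ge (ℓ - c) (by omega)
      omega
    -- x ∉ F
    have hxF : x ∉ F := by
      intro hxf
      obtain ⟨m', hm', he⟩ := ha_surj x hxf
      rcases Nat.lt_or_ge m' (ℓ - c) with hcase | hcase
      · -- m' < ℓ - c : a m' ≤ j + m' < x
        set k' := ℓ - 1 - m' with hk'
        have hk'l : k' < ℓ := by omega
        have hk'c : ¬ k' < c := by omega
        have hnj : ¬ j < lam k' := fun hc2 => hk'c ((hmem2 k' hk'l).mp hc2)
        rw [hlamval k' hk'l] at hnj
        have heq : ℓ - 1 - k' = m' := by omega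
        rw [heq] at hnj
        have := ha_ge m' hm'
        omega
      · -- m' ≥ ℓ - c : a m' ≥ a (ℓ-c) > x
        have hgap := ha_gap (m' - (ℓ - c)) (ℓ - c) (by omega)
        have heq : (ℓ - c) + (m' - (ℓ - c)) = m' := by omega
        rw [heq] at hgap
        -- a (ℓ-c) > x from hlc1
        rw [hlamval (c-1) hc1] at hlc1
        have heq2 : ℓ - 1 - (c-1) = ℓ - c := by omega
        rw [heq2] at hlc1
        have := ha_ge (ℓ - c) (by omega)
        omega
    -- hookP = a m - x
    have hookeq : hookP lam ℓ i j = (a m : ℤ) - x := by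
      rw [hookP, ← hc, hlamval i hi, ← hm]
      have := ha_ge m (by omega)
      omega
    rw [hookeq] at hdvd
    obtain ⟨tz, htz⟩ := hdvd
    have htzpos : 0 < tz := by
      rcases le_or_gt tz 0 with h0 | h0
      · have h9 : (n:ℤ) * tz ≤ 0 :=
          mul_nonpos_iff.mpr (Or.inl ⟨by positivity, h0⟩)
        omega
      · exact h0
    set t := tz.toNat with htdef
    have hteq : a m = x + n * t := by
      have : (a m : ℤ) = x + n * tz := by omega
      have ht2 : (t:ℤ) = tz := by omega
      rw [← ht2] at this
      exact_mod_cast this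
    obtain ⟨rr, hrr, q, hq, haq⟩ := (hmemF (a m)).mp (ha_mem m (by omega))
    rcases le_or_gt t q with hle | hlt
    · -- x = (q-t)*n + rr ∈ F
      apply hxF
      rw [hmemF]
      refine ⟨rr, hrr, q - t, by omega, ?_⟩
      have h7 : (q - t) * n + t * n = q * n := by rw [← Nat.add_mul, Nat.sub_add_cancel hle]
      have h8 : n * t = t * n := Nat.mul_comm n t
      omega
    · -- t > q : contradiction
      have h5 : n * (q + 1) ≤ n * t := Nat.mul_le_mul_left n (by omega)
      have h6 : n * (q + 1) = n * q + n := by ring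
      have h8 : n * q = q * n := Nat.mul_comm n q
      -- a m = q*n + rr, a m = x + n*t ≥ x + n*q + n > q*n + rr  since rr < n ≤ x + n
      omega
  have hcore : IsCore n lam ℓ := ⟨hanti, hposiff, hhook⟩
  refine ⟨lam, ℓ, hcore, ?_⟩
  -- bvec = b
  intro r hr
  have hstep0 : (Finset.range ℓ).filter (fun k => betaP lam ℓ k % (n:ℤ) = (r:ℤ)) =
      (Finset.range ℓ).filter (fun k => a (ℓ-1-k) % n = r) := by
    apply Finset.filter_congr
    intro k hk
    simp only [Finset.mem_range] at hk
    rw [hbeta k hk, ← Int.natCast_mod, Nat.cast_inj]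
  have hstep1 : bvec n lam ℓ r = ((Finset.range ℓ).filter (fun m => a m % n = r)).card := by
    rw [bvec, hstep0]
    apply Finset.card_nbij' (i := fun k => ℓ - 1 - k) (j := fun m => ℓ - 1 - m)
    · intro k hk
      simp only [Finset.mem_coe, Finset.mem_filter, Finset.mem_range] at hk ⊢
      exact ⟨by omega, hk.2⟩
    · intro m hm
      simp only [Finset.mem_coe, Finset.mem_filter, Finset.mem_range] at hm ⊢
      have heq : ℓ - 1 - (ℓ - 1 - m) = m := by omega
      exact ⟨by omega, by rw [heq]; exact hm.2⟩
    · intro k hk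
      simp only [Finset.mem_coe, Finset.mem_filter, Finset.mem_range] at hk
      dsimp only
      omega
    · intro m hm
      simp only [Finset.mem_coe, Finset.mem_filter, Finset.mem_range] at hm
      dsimp only
      omega
  have hstep2 : ((Finset.range ℓ).filter (fun m => a m % n = r)).card =
      (F.filter (fun x => x % n = r)).card := by
    apply Finset.card_bij (i := fun m _ => a m)
    · intro m hm
      simp only [Finset.mem_filter, Finset.mem_range] at hm ⊢
      exact ⟨ha_mem m hm.1, hm.2⟩
    · intro m1 h1 m2 h2 he
      simp only [Finset.mem_filter, Finset.mem_range] at h1 h2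
      by_contra hne
      rcases Nat.lt_or_ge m1 m2 with hlt | hge
      · have := ha_lt m1 m2 hlt h2.1; omega
      · have := ha_lt m2 m1 (by omega) h1.1; omega
    · intro x hx
      simp only [Finset.mem_filter] at hx
      obtain ⟨m, hm, he⟩ := ha_surj x hx.1
      exact ⟨m, by simp only [Finset.mem_filter, Finset.mem_range]; rw [he]; exact ⟨hm, hx.2⟩, he⟩
  have hstep3 : F.filter (fun x => x % n = r) = (Finset.range (b r)).image (fun q => q * n + r) := by
    ext x
    simp only [Finset.mem_filter, Finset.mem_image, Finset.mem_range]
    constructor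
    · rintro ⟨hxF2, hxr⟩
      obtain ⟨r', hr', q, hq, rfl⟩ := (hmemF _).mp hxF2
      have hmod : (q * n + r') % n = r' := by
        rw [Nat.add_comm, Nat.add_mul_mod_self_right, Nat.mod_eq_of_lt hr']
      have : r' = r := by omega
      subst this
      exact ⟨q, hq, rfl⟩
    · rintro ⟨q, hq, rfl⟩
      have hmod : (q * n + r) % n = r := by
        rw [Nat.add_comm, Nat.add_mul_mod_self_right, Nat.mod_eq_of_lt hr]
      exact ⟨(hmemF _).mpr ⟨r, hr, q, hq, rfl⟩, hmod⟩
  have hinj4 : Function.Injective (fun q => q * n + r) := by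
    intro q1 q2 he
    try dsimp only at he
    have h1 : q1 * n = q2 * n := by omega
    exact Nat.eq_of_mul_eq_mul_right (by omega) h1
  have hstep4 : ((Finset.range (b r)).image (fun q => q * n + r)).card = b r := by
    rw [Finset.card_image_of_injective _ hinj4, Finset.card_range]
  rw [hstep1, hstep2, hstep3, hstep4]

/-! ### The total order determined by a dominant alcove family -/

private def del (k : ℕ → ℕ → ℤ) (x y : ℕ) : ℤ := k 0 (y-1) - k 0 (x-1) - k x (y-1)

private def prec (k : ℕ → ℕ → ℤ) (x y : ℕ) : Prop :=
  (x < y ∧ del k x y = 0) ∨ (y < x ∧ del k y x = 1)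

open Classical in
private noncomputable def rank (n : ℕ) (k : ℕ → ℕ → ℤ) (i : ℕ) : ℕ :=
  1 + ((Finset.Icc 1 (n-1)).filter (fun x => prec k x i)).card

section Order

variable {n : ℕ} {k : ℕ → ℕ → ℤ}

private lemma del01 (hn : 2 ≤ n) (hk : DomAlcoveCoords n k) {x y : ℕ}
    (h1 : 1 ≤ x) (hxy : x < y) (hy : y ≤ n - 1) :
    del k x y = 0 ∨ del k x y = 1 := by
  have := hk.2 0 (x-1) (y-1) (by omega) (by omega) (by omega)
  have hx1 : x - 1 + 1 = x := by omega
  rw [hx1] at this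
  rw [del]
  omega

private lemma gam01 (hn : 2 ≤ n) (hk : DomAlcoveCoords n k) {x y z : ℕ}
    (h1 : 1 ≤ x) (hxy : x < y) (hyz : y < z) (hz : z ≤ n - 1) :
    k x (z-1) - k x (y-1) - k y (z-1) = 0 ∨ k x (z-1) - k x (y-1) - k y (z-1) = 1 := by
  have := hk.2 x (y-1) (z-1) (by omega) (by omega) (by omega)
  have hy1 : y - 1 + 1 = y := by omega
  rw [hy1] at this
  omega

private lemma del_ident {x y z : ℕ} (h1 : 1 ≤ x) (hxy : x < y) (hyz : y < z) :
    del k x y + del k y z = del k x z + (k x (z-1) - k x (y-1) - k y (z-1)) := by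
  simp only [del]
  ring

private lemma prec_irrefl (x : ℕ) : ¬ prec k x x := by
  rw [prec]
  omega

private lemma prec_asymm {x y : ℕ} : ¬ (prec k x y ∧ prec k y x) := by
  rw [prec, prec]
  omega

private lemma prec_total (hn : 2 ≤ n) (hk : DomAlcoveCoords n k) {x y : ℕ}
    (hx : x ∈ Finset.Icc 1 (n-1)) (hy : y ∈ Finset.Icc 1 (n-1)) (hne : x ≠ y) :
    prec k x y ∨ prec k y x := by
  simp only [Finset.mem_Icc] at hx hy
  rcases Nat.lt_or_ge x y with hlt | hge
  · rcases del01 hn hk hx.1 hlt hy.2 with h | h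
    · exact Or.inl (Or.inl ⟨hlt, h⟩)
    · exact Or.inr (Or.inr ⟨hlt, h⟩)
  · have hlt : y < x := by omega
    rcases del01 hn hk hy.1 hlt hx.2 with h | h
    · exact Or.inr (Or.inl ⟨hlt, h⟩)
    · exact Or.inl (Or.inr ⟨hlt, h⟩)

private lemma prec_trans (hn : 2 ≤ n) (hk : DomAlcoveCoords n k) {a c e : ℕ}
    (ha : a ∈ Finset.Icc 1 (n-1)) (hc : c ∈ Finset.Icc 1 (n-1)) (he : e ∈ Finset.Icc 1 (n-1))
    (h1 : prec k a c) (h2 : prec k c e) : prec k a e := by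
  simp only [Finset.mem_Icc] at ha hc he
  rcases eq_or_ne a e with rfl | hae
  · exact absurd ⟨h1, h2⟩ prec_asymm
  have hac : a ≠ c := by rintro rfl; exact prec_irrefl _ h1
  have hce : c ≠ e := by rintro rfl; exact prec_irrefl _ h2
  -- six orderings
  rcases Nat.lt_or_ge a c with hac' | hac' <;> rcases Nat.lt_or_ge c e with hce' | hce' <;>
    rcases Nat.lt_or_ge a e with hae' | hae'
  · -- a < c, c < e, a < e
    have hid := del_ident (k := k) ha.1 hac' hce'
    have hg := gam01 hn hk ha.1 hac' hce' he.2
    have hd := del01 hn hk ha.1 hae' he.2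
    rw [prec] at h1 h2 ⊢
    omega
  · omega
  · -- a < c, e ≤ c i.e. e < c (could be a < e or e < a), here a < e
    have hec : e < c := by omega
    have hid := del_ident (k := k) ha.1 hae' hec
    have hg := gam01 hn hk ha.1 hae' hec hc.2
    have hd := del01 hn hk ha.1 hae' he.2
    rw [prec] at h1 h2 ⊢
    omega
  · -- a < c, e < c, e < a
    have hec : e < c := by omega
    have hea : e < a := by omega
    have hid := del_ident (k := k) he.1 hea hac'
    have hg := gam01 hn hk he.1 hea hac' hc.2
    have hd := del01 hn hk he.1 hea ha.2
    rw [prec] at h1 h2 ⊢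
    omega
  · -- c < a, c < e, a < e
    have hca : c < a := by omega
    have hid := del_ident (k := k) hc.1 hca hae'
    have hg := gam01 hn hk hc.1 hca hae' he.2
    have hd := del01 hn hk ha.1 hae' he.2
    rw [prec] at h1 h2 ⊢
    omega
  · -- c < a, c < e, e < a
    have hca : c < a := by omega
    have hea : e < a := by omega
    have hid := del_ident (k := k) hc.1 hce' (by omega : e < a)
    have hg := gam01 hn hk hc.1 hce' (by omega : e < a) ha.2
    have hd := del01 hn hk he.1 hea ha.2
    rw [prec] at h1 h2 ⊢
    omega
  · -- c < a, e ≤ c, a < e: impossible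
    omega
  · -- e < c < a
    have hca : c < a := by omega
    have hec : e < c := by omega
    have hea : e < a := by omega
    have hid := del_ident (k := k) he.1 hec hca
    have hg := gam01 hn hk he.1 hec hca ha.2
    have hd := del01 hn hk he.1 hea ha.2
    rw [prec] at h1 h2 ⊢
    omega

private lemma rank_lt_iff (hn : 2 ≤ n) (hk : DomAlcoveCoords n k) {x y : ℕ}
    (hx : x ∈ Finset.Icc 1 (n-1)) (hy : y ∈ Finset.Icc 1 (n-1)) :
    prec k x y ↔ rank n k x < rank n k y := by
  classical
  constructor
  · intro hp
    have hsub : (Finset.Icc 1 (n-1)).filter (fun z => prec k z x) ⊆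
        (Finset.Icc 1 (n-1)).filter (fun z => prec k z y) := by
      intro z hz
      simp only [Finset.mem_filter] at hz ⊢
      exact ⟨hz.1, prec_trans hn hk hz.1 hx hy hz.2 hp⟩
    have hss : (Finset.Icc 1 (n-1)).filter (fun z => prec k z x) ⊂
        (Finset.Icc 1 (n-1)).filter (fun z => prec k z y) := by
      refine ⟨hsub, fun hsub' => ?_⟩
      have hxin : x ∈ (Finset.Icc 1 (n-1)).filter (fun z => prec k z y) := by
        simp only [Finset.mem_filter]; exact ⟨hx, hp⟩
      have := hsub' hxin
      simp only [Finset.mem_filter] at this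
      exact prec_irrefl x this.2
    have := Finset.card_lt_card hss
    rw [rank, rank]
    omega
  · intro hr
    have hne : x ≠ y := by rintro rfl; omega
    rcases prec_total hn hk hx hy hne with hp | hp
    · exact hp
    · -- prec y x gives rank y < rank x, contradiction
      exfalso
      have hsub : (Finset.Icc 1 (n-1)).filter (fun z => prec k z y) ⊆
          (Finset.Icc 1 (n-1)).filter (fun z => prec k z x) := by
        intro z hz
        simp only [Finset.mem_filter] at hz ⊢
        exact ⟨hz.1, prec_trans hn hk hz.1 hy hx hz.2 hp⟩
      have hss : (Finset.Icc 1 (n-1)).filter (fun z => prec k z y) ⊂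
          (Finset.Icc 1 (n-1)).filter (fun z => prec k z x) := by
        refine ⟨hsub, fun hsub' => ?_⟩
        have hyin : y ∈ (Finset.Icc 1 (n-1)).filter (fun z => prec k z x) := by
          simp only [Finset.mem_filter]; exact ⟨hy, hp⟩
        have := hsub' hyin
        simp only [Finset.mem_filter] at this
        exact prec_irrefl y this.2
      have := Finset.card_lt_card hss
      rw [rank, rank] at hr
      omega

private lemma rank_mem (hn : 2 ≤ n) {x : ℕ} (hx : x ∈ Finset.Icc 1 (n-1)) :
    rank n k x ∈ Finset.Icc 1 (n-1) := by
  classical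
  simp only [Finset.mem_Icc]
  refine ⟨by rw [rank]; omega, ?_⟩
  have hsub : (Finset.Icc 1 (n-1)).filter (fun z => prec k z x) ⊆ (Finset.Icc 1 (n-1)).erase x := by
    intro z hz
    simp only [Finset.mem_filter] at hz
    rw [Finset.mem_erase]
    refine ⟨fun he => ?_, hz.1⟩
    subst he
    exact prec_irrefl z hz.2
  have hcard := Finset.card_le_card hsub
  rw [Finset.card_erase_of_mem hx, Nat.card_Icc] at hcard
  rw [rank]
  omega

private lemma rank_injOn (hn : 2 ≤ n) (hk : DomAlcoveCoords n k) :
    Set.InjOn (rank n k) (Finset.Icc 1 (n-1)) := by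
  intro x hx y hy he
  simp only [Finset.coe_Icc, Set.mem_Icc] at hx hy
  by_contra hne
  have hx' : x ∈ Finset.Icc 1 (n-1) := by simp only [Finset.mem_Icc]; omega
  have hy' : y ∈ Finset.Icc 1 (n-1) := by simp only [Finset.mem_Icc]; omega
  rcases prec_total hn hk hx' hy' hne with hp | hp
  · have := (rank_lt_iff hn hk hx' hy').mp hp; omega
  · have := (rank_lt_iff hn hk hy' hx').mp hp; omega

private lemma rank_image (hn : 2 ≤ n) (hk : DomAlcoveCoords n k) :
    (Finset.Icc 1 (n-1)).image (rank n k) = Finset.Icc 1 (n-1) := by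
  classical
  apply Finset.eq_of_subset_of_card_le
  · intro y hy
    simp only [Finset.mem_image] at hy
    obtain ⟨x, hx, rfl⟩ := hy
    exact rank_mem hn hx
  · rw [Finset.card_image_of_injOn (rank_injOn hn hk)]

private lemma bij_count {A : Finset ℕ} {f : ℕ → ℕ} {m : ℕ}
    (himg : A.image f = Finset.Icc 1 m) (hinj : Set.InjOn f A) {a : ℕ} (ha : a ∈ A) :
    f a = 1 + (A.filter (fun x => f x < f a)).card := by
  classical
  have hfa : f a ∈ Finset.Icc 1 m := by
    rw [← himg]
    exact Finset.mem_image_of_mem f ha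
  simp only [Finset.mem_Icc] at hfa
  have h1 : (A.filter (fun x => f x < f a)).image f = (A.image f).filter (fun v => v < f a) := by
    rw [Finset.filter_image]
  have h2 : ((A.filter (fun x => f x < f a)).image f).card = (A.filter (fun x => f x < f a)).card :=
    Finset.card_image_of_injOn (hinj.mono (Finset.coe_subset.mpr (Finset.filter_subset _ _)))
  have h3 : (A.image f).filter (fun v => v < f a) = Finset.Icc 1 (f a - 1) := by
    rw [himg]
    ext v
    simp only [Finset.mem_filter, Finset.mem_Icc]
    omega
  have h4 : (Finset.Icc 1 (f a - 1)).card = f a - 1 := by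
    rw [Nat.card_Icc]
    omega
  rw [← h2, h1, h3, h4]
  omega

end Order

private noncomputable def pfun (n : ℕ) (k : ℕ → ℕ → ℤ) (i : ℕ) : ℕ :=
  if i = 0 then 0 else (k 0 (i-1)).toNat * n + rank n k i

open Classical in
private noncomputable def bfun (n : ℕ) (k : ℕ → ℕ → ℤ) (t : ℕ) : ℕ :=
  ∑ i ∈ Finset.Icc 1 (n-1), if rank n k i = t then (k 0 (i-1)).toNat else 0

section Exist

variable {n : ℕ} {k : ℕ → ℕ → ℤ}

private lemma bfun_zero (hn : 2 ≤ n) : bfun n k 0 = 0 := by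
  rw [bfun]
  apply Finset.sum_eq_zero
  intro i hi
  have := rank_mem (k := k) hn hi
  simp only [Finset.mem_Icc] at this
  rw [if_neg (by omega)]

private lemma bfun_rank (hn : 2 ≤ n) (hk : DomAlcoveCoords n k) {i : ℕ}
    (hi : i ∈ Finset.Icc 1 (n-1)) : bfun n k (rank n k i) = (k 0 (i-1)).toNat := by
  rw [bfun]
  rw [Finset.sum_eq_single_of_mem i hi]
  · rw [if_pos rfl]
  · intro j hj hne
    rw [if_neg (fun he => hne (rank_injOn hn hk (by simpa using hj) (by simpa using hi) he))]

private lemma hk_nonneg (hk : DomAlcoveCoords n k) {i j : ℕ} (hij : i ≤ j) (hj : j + 2 ≤ n) :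
    0 ≤ k i j := hk.1 i j hij hj

private lemma pfun_strictMono (hn : 2 ≤ n) (hk : DomAlcoveCoords n k) :
    ∀ i i', i < i' → i' < n → pfun n k i < pfun n k i' := by
  intro i i' hii hi'
  have hi'Icc : i' ∈ Finset.Icc 1 (n-1) := by simp only [Finset.mem_Icc]; omega
  have hri' := rank_mem (k := k) hn hi'Icc
  simp only [Finset.mem_Icc] at hri'
  rcases Nat.eq_zero_or_pos i with rfl | hipos
  · rw [pfun, if_pos rfl, pfun, if_neg (by omega)]
    omega
  · have hiIcc : i ∈ Finset.Icc 1 (n-1) := by simp only [Finset.mem_Icc]; omega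
    have hri := rank_mem (k := k) hn hiIcc
    simp only [Finset.mem_Icc] at hri
    rw [pfun, if_neg (by omega), pfun, if_neg (by omega)]
    have hK : ((k 0 (i-1)).toNat : ℤ) = k 0 (i-1) :=
      Int.toNat_of_nonneg (hk_nonneg hk (by omega) (by omega))
    have hK' : ((k 0 (i'-1)).toNat : ℤ) = k 0 (i'-1) :=
      Int.toNat_of_nonneg (hk_nonneg hk (by omega) (by omega))
    have hkii' : 0 ≤ k i (i'-1) := hk_nonneg hk (by omega) (by omega)
    have hdel := del01 hn hk (by omega : 1 ≤ i) hii (by omega)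
    have hdeldef : del k i i' = k 0 (i'-1) - k 0 (i-1) - k i (i'-1) := rfl
    -- go to ℤ
    have hgoal : ((k 0 (i-1)).toNat * n + rank n k i : ℤ) <
        ((k 0 (i'-1)).toNat * n + rank n k i' : ℤ) := by
      push_cast
      rw [hK, hK']
      have hmul : k 0 (i'-1) * n - k 0 (i-1) * n = (k 0 (i'-1) - k 0 (i-1)) * n := by ring
      rcases hdel with h0 | h1
      · -- del = 0 : rank i < rank i'
        have hrlt : rank n k i < rank n k i' :=
          (rank_lt_iff hn hk hiIcc hi'Icc).mp (Or.inl ⟨hii, h0⟩)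
        have hd0 : k 0 (i'-1) - k 0 (i-1) = k i (i'-1) := by rw [hdeldef] at h0; omega
        have hnn : 0 ≤ (k 0 (i'-1) - k 0 (i-1)) * n :=
          mul_nonneg (by omega) (by positivity)
        omega
      · -- del = 1 : rank i' < rank i but coefficient jumps by ≥ n
        have hrlt : rank n k i' < rank n k i :=
          (rank_lt_iff hn hk hi'Icc hiIcc).mp (Or.inr ⟨hii, h1⟩)
        have hd1 : k 0 (i'-1) - k 0 (i-1) = k i (i'-1) + 1 := by rw [hdeldef] at h1; omega
        have hge : (1:ℤ) * n ≤ (k 0 (i'-1) - k 0 (i-1)) * n :=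
          mul_le_mul_of_nonneg_right (by omega) (by positivity)
        omega
    exact_mod_cast hgoal

private lemma image_bfun_eq (hn : 2 ≤ n) (hk : DomAlcoveCoords n k) :
    (Finset.range n).image (fun t => bfun n k t * n + t) =
      (Finset.range n).image (pfun n k) := by
  classical
  ext x
  simp only [Finset.mem_image, Finset.mem_range]
  constructor
  · rintro ⟨t, ht, rfl⟩
    rcases Nat.eq_zero_or_pos t with rfl | htpos
    · refine ⟨0, by omega, ?_⟩
      rw [pfun, if_pos rfl, bfun_zero hn]
      simp
    · have htIcc : t ∈ Finset.Icc 1 (n-1) := by simp only [Finset.mem_Icc]; omega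
      have : t ∈ (Finset.Icc 1 (n-1)).image (rank n k) := by rw [rank_image hn hk]; exact htIcc
      simp only [Finset.mem_image] at this
      obtain ⟨i, hi, rfl⟩ := this
      have hiIcc := hi
      simp only [Finset.mem_Icc] at hiIcc
      refine ⟨i, by omega, ?_⟩
      rw [pfun, if_neg (by omega), bfun_rank hn hk hi]
  · rintro ⟨i, hi, rfl⟩
    rcases Nat.eq_zero_or_pos i with rfl | hipos
    · refine ⟨0, by omega, ?_⟩
      rw [pfun, if_pos rfl, bfun_zero hn]
      simp
    · have hiIcc : i ∈ Finset.Icc 1 (n-1) := by simp only [Finset.mem_Icc]; omega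
      have hri := rank_mem (k := k) hn hiIcc
      simp only [Finset.mem_Icc] at hri
      refine ⟨rank n k i, by omega, ?_⟩
      rw [pfun, if_neg (by omega), bfun_rank hn hk hiIcc]

private lemma getD_map_pfun (hn : 2 ≤ n) {m : ℕ} (hm : m < n) :
    ((List.range n).map (pfun n k)).getD m 0 = pfun n k m := by
  have hm' : m < ((List.range n).map (pfun n k)).length := by simp [hm]
  rw [List.getD_eq_getElem _ 0 hm']
  simp

/-- Main computation: `kOf` of the constructed core agrees with `k`. -/
private lemma kOf_of_psort_eq (hn : 2 ≤ n) (hk : DomAlcoveCoords n k)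
    {lam : ℕ → ℕ} {ℓ : ℕ}
    (hps : psort n lam ℓ = (List.range n).map (pfun n k)) :
    ∀ i j, i ≤ j → j + 2 ≤ n → kOf n lam ℓ i j = k i j := by
  intro i j hij hj
  have hnz : (0:ℤ) < n := by exact_mod_cast (by omega : 0 < n)
  rw [kOf, hps, getD_map_pfun hn (by omega : j + 1 < n), getD_map_pfun hn (by omega : i < n)]
  have hj1Icc : j + 1 ∈ Finset.Icc 1 (n-1) := by simp only [Finset.mem_Icc]; omega
  have hrj := rank_mem (k := k) hn hj1Icc
  simp only [Finset.mem_Icc] at hrj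
  have hKj : ((k 0 j).toNat : ℤ) = k 0 j := Int.toNat_of_nonneg (hk_nonneg hk (by omega) (by omega))
  have hsimp : (j + 1 - 1) = j := by omega
  have hpj : pfun n k (j+1) = (k 0 j).toNat * n + rank n k (j+1) := by
    rw [pfun, if_neg (by omega), hsimp]
  rcases Nat.eq_zero_or_pos i with rfl | hipos
  · -- i = 0
    have hp0 : pfun n k 0 = 0 := by rw [pfun, if_pos rfl]
    rw [hp0, hpj]
    have heq : ((((k 0 j).toNat * n + rank n k (j+1) : ℕ)) : ℤ) - ((0:ℕ):ℤ) =
        (n:ℤ) * (k 0 j) + (rank n k (j+1) : ℤ) := by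
      push_cast
      rw [hKj]
      ring
    rw [heq, ediv_shift n (k 0 j) _ hnz (by omega) (by omega)]
  · -- i ≥ 1
    have hiIcc : i ∈ Finset.Icc 1 (n-1) := by simp only [Finset.mem_Icc]; omega
    have hri := rank_mem (k := k) hn hiIcc
    simp only [Finset.mem_Icc] at hri
    have hpi : pfun n k i = (k 0 (i-1)).toNat * n + rank n k i := by
      rw [pfun, if_neg (by omega)]
    rw [hpj, hpi]
    have hKi : ((k 0 (i-1)).toNat : ℤ) = k 0 (i-1) :=
      Int.toNat_of_nonneg (hk_nonneg hk (by omega) (by omega))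
    have hdel := del01 hn hk (by omega : 1 ≤ i) (by omega : i < j + 1) (by omega)
    have hdeldef : del k i (j+1) = k 0 j - k 0 (i-1) - k i j := by
      rw [del, hsimp]
    have hsne : rank n k i ≠ rank n k (j+1) := by
      intro he
      have := rank_injOn hn hk (by simpa using hiIcc) (by simpa using hj1Icc) he
      omega
    rcases hdel with h0 | h1
    · -- del = 0
      have hrlt : rank n k i < rank n k (j+1) :=
        (rank_lt_iff hn hk hiIcc hj1Icc).mp (Or.inl ⟨by omega, h0⟩)
      have heq : ((((k 0 j).toNat * n + rank n k (j+1) : ℕ)) : ℤ) -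
          (((k 0 (i-1)).toNat * n + rank n k i : ℕ) : ℤ) =
          (n:ℤ) * (k i j) + ((rank n k (j+1) : ℤ) - rank n k i) := by
        push_cast
        rw [hKj, hKi]
        rw [hdeldef] at h0
        have h2 : k 0 j = k 0 (i-1) + k i j := by omega
        rw [h2]
        ring
      rw [heq, ediv_shift n (k i j) _ hnz (by omega) (by omega)]
    · -- del = 1
      have hrlt : rank n k (j+1) < rank n k i :=
        (rank_lt_iff hn hk hj1Icc hiIcc).mp (Or.inr ⟨by omega, h1⟩)
      have heq : ((((k 0 j).toNat * n + rank n k (j+1) : ℕ)) : ℤ) -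
          (((k 0 (i-1)).toNat * n + rank n k i : ℕ) : ℤ) =
          (n:ℤ) * (k i j) + ((n : ℤ) + rank n k (j+1) - rank n k i) := by
        push_cast
        rw [hKj, hKi]
        rw [hdeldef] at h1
        have h2 : k 0 j = k 0 (i-1) + k i j + 1 := by omega
        rw [h2]
        ring
      rw [heq, ediv_shift n (k i j) _ hnz (by omega) (by omega)]

private lemma exist_core (hn : 2 ≤ n) (hk : DomAlcoveCoords n k) :
    ∃ lam ℓ, IsCore n lam ℓ ∧ psort n lam ℓ = (List.range n).map (pfun n k) ∧
      (∀ r, r < n → bvec n lam ℓ r = bfun n k r) := by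
  obtain ⟨lam, ℓ, hcore, hbv⟩ := build_core hn (bfun n k) (bfun_zero hn)
  refine ⟨lam, ℓ, hcore, ?_, hbv⟩
  rw [psort]
  have himc : (Finset.range n).image (fun i => bvec n lam ℓ i * n + i) =
      (Finset.range n).image (pfun n k) := by
    rw [← image_bfun_eq hn hk]
    apply Finset.image_congr
    intro t ht
    simp only [Finset.mem_coe, Finset.mem_range] at ht
    simp only []
    rw [hbv t ht]
  rw [himc]
  exact sort_eq_map (pfun_strictMono hn hk)

end Exist

section Final

variable {n : ℕ} {k : ℕ → ℕ → ℤ}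

private lemma mod_resid {n q r : ℕ} (hr : r < n) : (q * n + r) % n = r := by
  rw [Nat.add_comm, Nat.add_mul_mod_self_right, Nat.mod_eq_of_lt hr]

private lemma psort_length (hn : 2 ≤ n) (lam : ℕ → ℕ) (ℓ : ℕ) :
    (psort n lam ℓ).length = n := by
  rw [psort, Finset.length_sort]
  rw [Finset.card_image_of_injOn, Finset.card_range]
  intro x hx y hy he
  simp only [Finset.coe_range, Set.mem_Iio] at hx hy
  try dsimp only at he
  have h1 : (bvec n lam ℓ x * n + x) % n = x := mod_resid hx
  have h2 : (bvec n lam ℓ y * n + y) % n = y := mod_resid hy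
  rw [← h1, ← h2, he]

private lemma psort_sorted (lam : ℕ → ℕ) (ℓ : ℕ) : (psort n lam ℓ).Pairwise (· < ·) := by
  rw [psort]
  exact (Finset.sortedLT_sort _).pairwise

private lemma psort_getD_mem (hn : 2 ≤ n) (lam : ℕ → ℕ) (ℓ : ℕ) {m : ℕ} (hm : m < n) :
    ∃ t, t < n ∧ (psort n lam ℓ).getD m 0 = bvec n lam ℓ t * n + t := by
  have hm' : m < (psort n lam ℓ).length := by rw [psort_length hn]; omega
  rw [List.getD_eq_getElem _ 0 hm']
  have hmem := List.getElem_mem hm'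
  have hmem2 : (psort n lam ℓ)[m]'hm' ∈
      (Finset.range n).image (fun t => bvec n lam ℓ t * n + t) :=
    (Finset.mem_sort (α := ℕ) (· ≤ ·)).mp hmem
  simp only [Finset.mem_image, Finset.mem_range] at hmem2
  obtain ⟨t, ht, he⟩ := hmem2
  exact ⟨t, ht, he.symm⟩

private lemma psort_getD_surj (hn : 2 ≤ n) (lam : ℕ → ℕ) (ℓ : ℕ) {x : ℕ}
    (hx : x ∈ (Finset.range n).image (fun t => bvec n lam ℓ t * n + t)) :
    ∃ m, m < n ∧ (psort n lam ℓ).getD m 0 = x := by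
  have hxs : x ∈ psort n lam ℓ := (Finset.mem_sort (· ≤ ·)).mpr hx
  obtain ⟨m, hm, he⟩ := List.mem_iff_getElem.mp hxs
  have hm2 : m < n := by
    have := psort_length (lam := lam) (ℓ := ℓ) hn
    omega
  refine ⟨m, hm2, ?_⟩
  rw [List.getD_eq_getElem _ 0 hm, he]

/-- Forward direction: `kOf` of anything is a dominant alcove family. -/
private lemma kOf_dom (hn : 2 ≤ n) (lam : ℕ → ℕ) (ℓ : ℕ) :
    DomAlcoveCoords n (kOf n lam ℓ) := by
  have hnz : (0:ℤ) < n := by exact_mod_cast (by omega : 0 < n)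
  constructor
  · intro i j hij hj
    rw [kOf]
    apply Int.ediv_nonneg _ hnz.le
    have hmono : (psort n lam ℓ).getD i 0 ≤ (psort n lam ℓ).getD (j+1) 0 := by
      apply sorted_getD_mono ((psort_sorted lam ℓ).imp le_of_lt) (by omega)
      rw [psort_length hn]
      omega
    omega
  · intro i t j hit htj hj
    rw [kOf, kOf, kOf]
    have hb := ediv_bounds
      (((psort n lam ℓ).getD (t + 1) 0 : ℤ) - ((psort n lam ℓ).getD i 0 : ℤ))
      (((psort n lam ℓ).getD (j + 1) 0 : ℤ) - ((psort n lam ℓ).getD (t + 1) 0 : ℤ)) n hnz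
    have hsum : (((psort n lam ℓ).getD (t + 1) 0 : ℤ) - ((psort n lam ℓ).getD i 0 : ℤ)) +
        (((psort n lam ℓ).getD (j + 1) 0 : ℤ) - ((psort n lam ℓ).getD (t + 1) 0 : ℤ)) =
        ((psort n lam ℓ).getD (j + 1) 0 : ℤ) - ((psort n lam ℓ).getD i 0 : ℤ) := by ring
    rw [hsum] at hb
    exact hb

/-- Uniqueness: any core matching `k` has the canonical psort. -/
private lemma uniq_psort (hn : 2 ≤ n) (hk : DomAlcoveCoords n k) {lam : ℕ → ℕ} {ℓ : ℕ}
    (hcore : IsCore n lam ℓ)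
    (hmatch : ∀ i j, i ≤ j → j + 2 ≤ n → kOf n lam ℓ i j = k i j) :
    psort n lam ℓ = (List.range n).map (pfun n k) := by
  classical
  have hnz : (0:ℤ) < n := by exact_mod_cast (by omega : 0 < n)
  set q : ℕ → ℕ := fun m => (psort n lam ℓ).getD m 0 with hqdef
  have hqe : ∀ m, (psort n lam ℓ).getD m 0 = q m := fun _ => rfl
  have hqlt : ∀ m m', m < m' → m' < n → q m < q m' := by
    intro m m' hmm hm'
    show (psort n lam ℓ).getD m 0 < (psort n lam ℓ).getD m' 0
    apply sorted_getD_strictMono (psort_sorted lam ℓ) hmm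
    rw [psort_length hn]
    omega
  have hqform : ∀ m, m < n → q m = bvec n lam ℓ (q m % n) * n + (q m % n) ∧ q m % n < n := by
    intro m hm
    obtain ⟨t, ht, he⟩ := psort_getD_mem hn lam ℓ hm
    have hqm : q m = bvec n lam ℓ t * n + t := he
    have hmod : q m % n = t := by rw [hqm]; exact mod_resid ht
    rw [hmod]
    exact ⟨hqm, by omega⟩
  have hq0 : q 0 = 0 := by
    have hbz := bvec_zero hcore hn
    have h0mem : (0:ℕ) ∈ (Finset.range n).image (fun t => bvec n lam ℓ t * n + t) := by
      simp only [Finset.mem_image, Finset.mem_range]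
      exact ⟨0, by omega, by rw [hbz]; ring⟩
    obtain ⟨m, hm, he⟩ := psort_getD_surj hn lam ℓ h0mem
    rw [hqe m] at he
    rcases Nat.eq_zero_or_pos m with rfl | hmpos
    · exact he
    · have := hqlt 0 m hmpos hm
      omega
  have hsinj : ∀ m m', m < n → m' < n → q m % n = q m' % n → m = m' := by
    intro m m' hm hm' he
    have h1 := (hqform m hm).1
    have h2 := (hqform m' hm').1
    rw [he] at h1
    have hqq : q m = q m' := by rw [h1, ← h2]
    by_contra hne
    rcases Nat.lt_or_ge m m' with hlt | hge
    · have := hqlt m m' hlt hm'; omega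
    · have := hqlt m' m (by omega) hm; omega
  have hs0 : q 0 % n = 0 := by rw [hq0]; exact Nat.zero_mod n
  have hsmem : ∀ m, m ∈ Finset.Icc 1 (n-1) → q m % n ∈ Finset.Icc 1 (n-1) := by
    intro m hm
    simp only [Finset.mem_Icc] at hm ⊢
    have h2 := (hqform m (by omega)).2
    have h3 : q m % n ≠ 0 := by
      intro h0
      have : m = 0 := hsinj m 0 (by omega) (by omega) (by rw [h0, hs0])
      omega
    omega
  have hsimg : (Finset.Icc 1 (n-1)).image (fun m => q m % n) = Finset.Icc 1 (n-1) := by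
    apply Finset.eq_of_subset_of_card_le
    · intro y hy
      simp only [Finset.mem_image] at hy
      obtain ⟨x, hx, rfl⟩ := hy
      exact hsmem x hx
    · rw [Finset.card_image_of_injOn]
      intro x hx y hy he
      simp only [Finset.coe_Icc, Set.mem_Icc] at hx hy
      exact hsinj x y (by omega) (by omega) he
  have hdiv : ∀ m, 1 ≤ m → m < n → (q m : ℤ) = n * k 0 (m-1) + ((q m % n : ℕ) : ℤ) ∧
      k 0 (m-1) = (bvec n lam ℓ (q m % n) : ℤ) := by
    intro m h1 h2
    have hkof := hmatch 0 (m-1) (by omega) (by omega)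
    rw [kOf] at hkof
    have hidx : m - 1 + 1 = m := by omega
    rw [hidx, hqe m, hqe 0, hq0] at hkof
    norm_num at hkof
    obtain ⟨hform, hslt⟩ := hqform m (by omega)
    have hcast : (q m : ℤ) = (n:ℤ) * (bvec n lam ℓ (q m % n)) + ((q m % n : ℕ) : ℤ) := by
      have hc : ((bvec n lam ℓ (q m % n) : ℤ)) * n = (n:ℤ) * (bvec n lam ℓ (q m % n)) :=
        mul_comm _ _
      have hce := congrArg (fun x : ℕ => (x : ℤ)) hform
      push_cast at hce
      omega
    have hdivval : ((q m : ℤ)) / n = (bvec n lam ℓ (q m % n) : ℤ) := by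
      rw [hcast, ediv_shift n _ _ hnz (by positivity) (by exact_mod_cast hslt)]
    have hk0 : k 0 (m-1) = (bvec n lam ℓ (q m % n) : ℤ) := by rw [← hkof, hdivval]
    exact ⟨by rw [hk0]; exact hcast, hk0⟩
  have hcomp : ∀ m m', 1 ≤ m → m < m' → m' < n → (prec k m m' ↔ q m % n < q m' % n) := by
    intro m m' h1 hmm hm'
    have hd := hdiv m h1 (by omega)
    have hd' := hdiv m' (by omega) hm'
    have hkof := hmatch m (m'-1) (by omega) (by omega)
    rw [kOf] at hkof
    have hidx : m' - 1 + 1 = m' := by omega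
    rw [hidx, hqe m', hqe m] at hkof
    have hsne : q m % n ≠ q m' % n := fun he => by
      have := hsinj m m' (by omega) hm' he; omega
    have hs1 := (hqform m (by omega)).2
    have hs2 := (hqform m' hm').2
    have hdeldef : del k m m' = k 0 (m'-1) - k 0 (m-1) - k m (m'-1) := rfl
    rcases Nat.lt_or_ge (q m % n) (q m' % n) with hlt | hge
    · have heq : (q m' : ℤ) - q m = (n:ℤ) * (k 0 (m'-1) - k 0 (m-1)) +
          (((q m' % n : ℕ) : ℤ) - ((q m % n : ℕ) : ℤ)) := by
        rw [hd.1, hd'.1]; ring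
      rw [heq, ediv_shift n _ _ hnz (by omega) (by omega)] at hkof
      refine iff_of_true (Or.inl ⟨hmm, ?_⟩) hlt
      rw [hdeldef]
      omega
    · have hlt2 : q m' % n < q m % n := by omega
      have heq : (q m' : ℤ) - q m = (n:ℤ) * (k 0 (m'-1) - k 0 (m-1) - 1) +
          ((n:ℤ) + ((q m' % n : ℕ) : ℤ) - ((q m % n : ℕ) : ℤ)) := by
        rw [hd.1, hd'.1]; ring
      rw [heq, ediv_shift n _ _ hnz (by omega) (by omega)] at hkof
      refine iff_of_false ?_ (by omega)
      rintro (⟨_, hdel⟩ | ⟨hlt3, _⟩)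
      · rw [hdeldef] at hdel; omega
      · omega
  have hprec_iff : ∀ x y, x ∈ Finset.Icc 1 (n-1) → y ∈ Finset.Icc 1 (n-1) →
      (prec k x y ↔ q x % n < q y % n) := by
    intro x y hx hy
    have hx' := hx
    have hy' := hy
    simp only [Finset.mem_Icc] at hx' hy'
    rcases lt_trichotomy x y with h | rfl | h
    · exact hcomp x y (by omega) h (by omega)
    · exact iff_of_false (prec_irrefl x) (lt_irrefl _)
    · have hyx := hcomp y x (by omega) h (by omega)
      constructor
      · intro hp
        by_contra hnlt
        have hne : q x % n ≠ q y % n := fun he => by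
          have := hsinj x y (by omega) (by omega) he; omega
        have hlt : q y % n < q x % n := by omega
        exact prec_asymm ⟨hp, hyx.mpr hlt⟩
      · intro hlt
        rcases prec_total hn hk hx hy (by omega) with hp | hp
        · exact hp
        · have := hyx.mp hp; omega
  have hrank : ∀ x, x ∈ Finset.Icc 1 (n-1) → q x % n = rank n k x := by
    intro x hx
    have hinj2 : Set.InjOn (fun m => q m % n) (Finset.Icc 1 (n-1)) := by
      intro a ha b hb he
      simp only [Finset.coe_Icc, Set.mem_Icc] at ha hb
      exact hsinj a b (by omega) (by omega) he
    have hbc := bij_count hsimg hinj2 hx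
    have hfe : (Finset.Icc 1 (n-1)).filter (fun z => q z % n < q x % n) =
        (Finset.Icc 1 (n-1)).filter (fun z => prec k z x) := by
      apply Finset.filter_congr
      intro z hz
      exact (hprec_iff z x hz hx).symm
    rw [rank, ← hfe, ← hbc]
  have hqp : ∀ m, m < n → q m = pfun n k m := by
    intro m hm
    rcases Nat.eq_zero_or_pos m with rfl | hmpos
    · rw [hq0, pfun, if_pos rfl]
    · have hmIcc : m ∈ Finset.Icc 1 (n-1) := by simp only [Finset.mem_Icc]; omega
      have hd := hdiv m (by omega) hm
      have hform := (hqform m hm).1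
      rw [pfun, if_neg (by omega)]
      have htn : (k 0 (m-1)).toNat = bvec n lam ℓ (q m % n) := by
        rw [hd.2]
        exact Int.toNat_natCast _
      rw [htn, ← hrank m hmIcc, ← hform]
  apply List.ext_getElem
  · rw [psort_length hn]
    simp
  · intro i h1 h2
    have hi : i < n := by rw [psort_length hn] at h1; exact h1
    have e1 : (psort n lam ℓ)[i] = q i := (List.getD_eq_getElem _ 0 h1).symm
    rw [e1, hqp i hi]
    simp

end Final

/-- the map `Ψ` sending an `n`-core to the alcove with Shi coordinates
`k_{ij} = ⌊(p_{j+1} - p_i)/n⌋` is a bijection from `n`-cores to dominant alcoves. -/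
theorem psi_bijection (n : ℕ) (hn : 2 ≤ n) :
    (∀ lam ℓ, IsCore n lam ℓ → DomAlcoveCoords n (kOf n lam ℓ)) ∧
    (∀ k : ℕ → ℕ → ℤ, DomAlcoveCoords n k →
      ∃! c : {c : (ℕ → ℕ) × ℕ // IsCore n c.1 c.2},
        ∀ i j, i ≤ j → j + 2 ≤ n → kOf n c.1.1 c.1.2 i j = k i j) := by
  constructor
  · intro lam ℓ _
    exact kOf_dom hn lam ℓ
  · intro k hk
    obtain ⟨lam, ℓ, hcore, hps, hbv⟩ := exist_core hn hk
    refine ⟨⟨(lam, ℓ), hcore⟩, kOf_of_psort_eq hn hk hps, ?_⟩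
    rintro ⟨⟨lam', ℓ'⟩, hcore'⟩ hmatch
    have hps' := uniq_psort hn hk hcore' hmatch
    have hbv' : ∀ r, r < n → bvec n lam' ℓ' r = bvec n lam ℓ r := by
      intro r hr
      have hPeq : (Finset.range n).image (fun t => bvec n lam' ℓ' t * n + t) =
          (Finset.range n).image (fun t => bvec n lam ℓ t * n + t) := by
        have h1 : psort n lam' ℓ' = psort n lam ℓ := by rw [hps', hps]
        have h2 := congrArg List.toFinset h1
        rw [psort, psort, Finset.sort_toFinset, Finset.sort_toFinset] at h2
        exact h2
      have hmem : bvec n lam' ℓ' r * n + r ∈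
          (Finset.range n).image (fun t => bvec n lam ℓ t * n + t) := by
        rw [← hPeq]
        exact Finset.mem_image_of_mem _ (Finset.mem_range.mpr hr)
      simp only [Finset.mem_image, Finset.mem_range] at hmem
      obtain ⟨t, ht, he⟩ := hmem
      have h1 : (bvec n lam ℓ t * n + t) % n = t := mod_resid ht
      have h2 : (bvec n lam' ℓ' r * n + r) % n = r := mod_resid hr
      rw [he, h2] at h1
      subst h1
      have h3 : bvec n lam ℓ r * n = bvec n lam' ℓ' r * n := by omega
      exact (Nat.eq_of_mul_eq_mul_right (by omega) h3).symm
    obtain ⟨hlameq, hleq⟩ := core_eq_of_bvec hcore' hcore hn hbv'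
    apply Subtype.ext
    simp only
    rw [Prod.ext_iff]
    exact ⟨hlameq, hleq⟩
end Shi
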